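/- arXiv:2103.14747 — 2 statements merged into one kernel-verified Lean document; each statement's English description precedes it below -/
import Mathlib

section
/- Let $a, b$ be complex numbers with $|a/b| < 1$ and $|b| \geq 2$. Then $b\left[1 - \left(1 - \frac{a}{b}\right)\left(1 - \frac{1}{b}\right)^{-a}\right] = \frac{a(a-1)}{b}\left[\frac{1}{2} + \sum_{n=1}^{\infty} \frac{(a+1)(a+2)\cdots(a+n)}{b^n (n+1)!} \cdot \frac{n+1}{n+2}\right]$, where $(1-1/b)^{-a} = \exp(-a \log(1 - 1/b))$ using the principal branch of the logarithm. -/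
open scoped BigOperators
open Complex Finset Metric Filter

set_option maxHeartbeats 1000000

noncomputable def wc (a : ℂ) (n : ℕ) : ℂ :=
  (∏ k ∈ Finset.range n, (a + k)) / (n.factorial : ℂ)

noncomputable def wd (a : ℂ) (n : ℕ) : ℝ :=
  ∏ k ∈ Finset.range n, ((‖a‖ + k + 1) / (k + 1))

lemma wc_def (a : ℂ) (n : ℕ) :
    wc a n = (∏ k ∈ Finset.range n, (a + k)) / (n.factorial : ℂ) := rfl

lemma wc_zero (a : ℂ) : wc a 0 = 1 := by simp [wc]

lemma wc_one (a : ℂ) : wc a 1 = a := by simp [wc]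

lemma wc_succ (a : ℂ) (n : ℕ) : wc a (n+1) = wc a n * ((a + n) / (n + 1)) := by
  have hn : ((n:ℂ) + 1) ≠ 0 := by
    have := Nat.cast_add_one_ne_zero (R := ℂ) n
    exact_mod_cast this
  have hf : ((n.factorial : ℂ)) ≠ 0 := Nat.cast_ne_zero.mpr (Nat.factorial_ne_zero n)
  rw [wc, wc, Finset.prod_range_succ, Nat.factorial_succ]
  push_cast
  rw [mul_comm ((n:ℂ)+1) (n.factorial:ℂ), mul_div_mul_comm]

lemma wc_rec (a : ℂ) (n : ℕ) : ((n:ℂ) + 1) * wc a (n+1) = (a + n) * wc a n := by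
  have hn : ((n:ℂ) + 1) ≠ 0 := by
    have := Nat.cast_add_one_ne_zero (R := ℂ) n
    exact_mod_cast this
  rw [wc_succ]
  field_simp

lemma wd_pos (a : ℂ) (n : ℕ) : 0 < wd a n := by
  apply Finset.prod_pos
  intro k _
  have : (0:ℝ) ≤ ‖a‖ := norm_nonneg a
  positivity

lemma wd_succ (a : ℂ) (n : ℕ) :
    wd a (n+1) = wd a n * ((‖a‖ + n + 1) / (n + 1)) := by
  rw [wd, wd, Finset.prod_range_succ]

lemma norm_wc_le (a : ℂ) (n : ℕ) : ‖wc a n‖ ≤ wd a n := by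
  induction n with
  | zero => simp [wc_zero, wd]
  | succ n ih =>
    rw [wc_succ, wd_succ, norm_mul, norm_div]
    have h1 : ‖a + (n:ℂ)‖ ≤ ‖a‖ + n + 1 := by
      calc ‖a + (n:ℂ)‖ ≤ ‖a‖ + ‖(n:ℂ)‖ := norm_add_le _ _
        _ = ‖a‖ + n := by simp [Complex.norm_natCast]
        _ ≤ ‖a‖ + n + 1 := by linarith
    have h2 : ‖((n:ℂ) + 1)‖ = (n:ℝ) + 1 := by
      have : ((n:ℂ) + 1) = ((n+1 : ℕ) : ℂ) := by push_cast; ring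
      rw [this, Complex.norm_natCast]; push_cast; ring
    rw [h2]
    have hn1 : (0:ℝ) < (n:ℝ) + 1 := by positivity
    have habs : (0:ℝ) ≤ ‖a‖ := norm_nonneg a
    exact mul_le_mul ih ((div_le_div_iff_of_pos_right hn1).mpr h1) (by positivity) (le_of_lt (wd_pos a n))


lemma summable_main (a : ℂ) :
    Summable (fun n : ℕ => ((n:ℝ) + 1) * wd a (n+1) * (3/4 : ℝ)^n) := by
  have hpos : ∀ n : ℕ, 0 < ((n:ℝ) + 1) * wd a (n+1) * (3/4 : ℝ)^n := by
    intro n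
    have := wd_pos a (n+1)
    positivity
  apply summable_of_ratio_test_tendsto_lt_one (l := 3/4) (by norm_num)
    (Filter.Eventually.of_forall fun n => (hpos n).ne')
  have heq : ∀ n : ℕ,
      ‖(((n+1:ℕ):ℝ) + 1) * wd a ((n+1)+1) * (3/4:ℝ)^(n+1)‖ / ‖((n:ℝ) + 1) * wd a (n+1) * (3/4:ℝ)^n‖
        = (3/4) * (1 + (‖a‖ + 1) / ((n:ℝ) + 1)) := by
    intro n
    rw [Real.norm_of_nonneg (hpos (n+1)).le,
        Real.norm_of_nonneg (hpos n).le, wd_succ a (n+1)]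
    have h1 : ((n:ℝ) + 1) ≠ 0 := by positivity
    have h2 : ((n:ℝ) + 2) ≠ 0 := by positivity
    have h3 : wd a (n+1) ≠ 0 := (wd_pos a (n+1)).ne'
    have h4 : (3/4:ℝ)^n ≠ 0 := by positivity
    push_cast
    field_simp
    ring
  have ht : Tendsto (fun n : ℕ => ((n:ℝ) + 1)) atTop atTop :=
    tendsto_atTop_add_const_right _ _ tendsto_natCast_atTop_atTop
  have h0 : Tendsto (fun n : ℕ => (‖a‖ + 1) / ((n:ℝ) + 1)) atTop (nhds 0) :=
    Tendsto.div_atTop tendsto_const_nhds ht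
  have htend : Tendsto (fun n : ℕ => (3/4) * (1 + (‖a‖ + 1) / ((n:ℝ) + 1)))
      atTop (nhds (3/4 : ℝ)) := by
    have := (((tendsto_const_nhds (f := atTop (α := ℕ)) (x := (1:ℝ))).add h0).const_mul (3/4:ℝ))
    simpa using this
  exact Tendsto.congr (fun n => (heq n).symm) htend


lemma wd_le (a : ℂ) (n : ℕ) : wd a n ≤ ((n:ℝ)+1) * wd a (n+1) := by
  have habs : (0:ℝ) ≤ ‖a‖ := norm_nonneg a
  have hn : (0:ℝ) < (n:ℝ) + 1 := by positivity
  have hp := wd_pos a n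
  rw [wd_succ]
  rw [show ((n:ℝ)+1) * (wd a n * ((‖a‖ + n + 1)/((n:ℝ)+1)))
      = wd a n * (‖a‖ + n + 1) by field_simp]
  nlinarith

lemma summable_SA (a : ℂ) {w : ℂ} (hw : ‖w‖ ≤ 3/4) :
    Summable (fun n : ℕ => wc a n * w ^ n) := by
  apply Summable.of_norm_bounded (summable_main a)
  intro n
  rw [norm_mul, norm_pow]
  have h1 : ‖wc a n‖ * ‖w‖^n ≤ wd a n * (3/4)^n :=
    mul_le_mul (norm_wc_le a n) (pow_le_pow_left₀ (norm_nonneg w) hw n)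
      (by positivity) (wd_pos a n).le
  exact h1.trans (mul_le_mul_of_nonneg_right (wd_le a n) (by positivity))

lemma summable_u' (a : ℂ) :
    Summable (fun n : ℕ => (n:ℝ) * wd a n * (3/4:ℝ)^(n-1)) := by
  rw [← summable_nat_add_iff 1]
  have h : ∀ n : ℕ, (((n+1:ℕ)):ℝ) * wd a (n+1) * (3/4:ℝ)^((n+1)-1)
      = ((n:ℝ)+1) * wd a (n+1) * (3/4:ℝ)^n := by
    intro n; push_cast; norm_num
  exact (summable_main a).congr fun n => (h n).symm

lemma normSB_le (a : ℂ) {w : ℂ} (hw : ‖w‖ ≤ 3/4) (n : ℕ) :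
    ‖wc a n * ((n:ℂ) * w ^ (n-1))‖ ≤ (n:ℝ) * wd a n * (3/4:ℝ)^(n-1) := by
  rw [norm_mul, norm_mul, norm_pow, Complex.norm_natCast]
  have h : ‖wc a n‖ * ((n:ℝ) * ‖w‖^(n-1)) ≤ wd a n * ((n:ℝ) * (3/4)^(n-1)) :=
    mul_le_mul (norm_wc_le a n)
      (mul_le_mul_of_nonneg_left (pow_le_pow_left₀ (norm_nonneg w) hw _) (n.cast_nonneg))
      (by positivity) (wd_pos a n).le
  refine h.trans (le_of_eq ?_)
  ring

lemma summable_SB (a : ℂ) {w : ℂ} (hw : ‖w‖ ≤ 3/4) :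
    Summable (fun n : ℕ => wc a n * ((n:ℂ) * w ^ (n-1))) :=
  Summable.of_norm_bounded (summable_u' a) (normSB_le a hw)


lemma hasSum_wc (a : ℂ) {z : ℂ} (hz : ‖z‖ < 3/4) :
    HasSum (fun n : ℕ => wc a n * z ^ n) (Complex.exp (-a * Complex.log (1 - z))) := by
  set t : Set ℂ := Metric.ball (0:ℂ) (3/4) with ht
  have hmem : ∀ w : ℂ, w ∈ t ↔ ‖w‖ < 3/4 := by
    intro w; rw [ht, Metric.mem_ball, dist_eq_norm, sub_zero]
  have hzt : z ∈ t := (hmem z).mpr hz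
  have h0t : (0:ℂ) ∈ t := (hmem 0).mpr (by norm_num)
  set f : ℂ → ℂ := fun y => ∑' n : ℕ, wc a n * y ^ n with hfdef
  set D : ℂ → ℂ := fun w => ∑' n : ℕ, wc a n * ((n:ℂ) * w ^ (n-1)) with hDdef
  have hder : ∀ w ∈ t, HasDerivAt f (D w) w := by
    intro w hwt
    exact hasDerivAt_tsum_of_isPreconnected (summable_u' a) Metric.isOpen_ball
      (convex_ball (0:ℂ) (3/4)).isPreconnected
      (fun n y _ => (hasDerivAt_pow n y).const_mul (wc a n))
      (fun n y hy => normSB_le a (le_of_lt ((hmem y).mp hy)) n)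
      h0t (summable_SA a (by norm_num)) hwt
  have hode : ∀ w ∈ t, (1 - w) * D w = a * f w := by
    intro w hwt
    have hw34 : ‖w‖ ≤ 3/4 := le_of_lt ((hmem w).mp hwt)
    have hB : HasSum (fun n : ℕ => wc a n * ((n:ℂ) * w^(n-1))) (D w) :=
      (summable_SB a hw34).hasSum
    have hC : HasSum (fun n : ℕ => ((n:ℂ)+1) * wc a (n+1) * w^n) (D w) := by
      have hsum0 : (∑ i ∈ Finset.range 1, wc a i * ((i:ℂ) * w^(i-1))) = 0 := by
        simp
      have hB' : HasSum (fun n : ℕ => wc a n * ((n:ℂ) * w^(n-1)))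
          (D w + ∑ i ∈ Finset.range 1, wc a i * ((i:ℂ) * w^(i-1))) := by
        rw [hsum0, add_zero]; exact hB
      have hshift : HasSum (fun n : ℕ => wc a (n+1) * (((n+1:ℕ):ℂ) * w^((n+1)-1))) (D w) :=
        (hasSum_nat_add_iff (f := fun n : ℕ => wc a n * ((n:ℂ) * w^(n-1))) 1).mpr hB'
      have h0 : (fun n : ℕ => wc a (n+1) * (((n+1:ℕ):ℂ) * w^((n+1)-1)))
          = fun n : ℕ => ((n:ℂ)+1) * wc a (n+1) * w^n := by
        funext n; push_cast; ring
      rwa [h0] at hshift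
    have hD : HasSum (fun n : ℕ => (n:ℂ) * wc a n * w^n) (w * D w) := by
      have hmul := hC.mul_left w
      have h1 : (fun n : ℕ => w * (((n:ℂ)+1) * wc a (n+1) * w^n))
          = fun n : ℕ => (((n+1:ℕ)):ℂ) * wc a (n+1) * w^(n+1) := by
        funext n; push_cast; ring
      rw [h1] at hmul
      have hres := (hasSum_nat_add_iff (f := fun n : ℕ => (n:ℂ) * wc a n * w^n) 1).mp hmul
      have hsum0 : (∑ i ∈ Finset.range 1, ((i:ℂ) * wc a i * w^i)) = 0 := by simp
      rw [hsum0, add_zero] at hres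
      exact hres
    have hf : HasSum (fun n : ℕ => wc a n * w^n) (f w) := (summable_SA a hw34).hasSum
    have hsub := hC.sub hD
    have h2 : (fun n : ℕ => ((n:ℂ)+1) * wc a (n+1) * w^n - (n:ℂ) * wc a n * w^n)
        = fun n : ℕ => a * (wc a n * w^n) := by
      funext n
      linear_combination (w^n) * (wc_rec a n)
    rw [h2] at hsub
    have huniq : a * f w = D w - w * D w := (hf.mul_left a).unique hsub
    linear_combination -huniq
  set F : ℂ → ℂ := fun w => Complex.exp (a * Complex.log (1 - w)) with hFdef
  have hFd : ∀ w ∈ t, HasDerivAt F (F w * (a * ((1-w)⁻¹ * (-1)))) w := by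
    intro w hwt
    have hw34 : ‖w‖ < 3/4 := (hmem w).mp hwt
    have hre : (1 - w : ℂ) ∈ Complex.slitPlane := by
      refine Or.inl ?_
      have : |w.re| ≤ ‖w‖ := Complex.abs_re_le_norm w
      have : w.re < 3/4 := lt_of_le_of_lt (le_trans (le_abs_self _) this) hw34
      simp only [Complex.sub_re, Complex.one_re]
      linarith
    have h1 : HasDerivAt (fun y : ℂ => 1 - y) (-1) w := by
      simpa using (hasDerivAt_id w).const_sub 1
    have h2 : HasDerivAt (fun y : ℂ => Complex.log (1 - y)) ((1-w)⁻¹ * (-1)) w :=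
      (Complex.hasDerivAt_log hre).comp w h1
    exact (h2.const_mul a).cexp
  have hzero : ∀ w ∈ t, HasDerivAt (fun y => f y * F y) 0 w := by
    intro w hwt
    have hmul := (hder w hwt).mul (hFd w hwt)
    have hne : (1 - w : ℂ) ≠ 0 := by
      intro h
      have : (1:ℂ) = w := by linear_combination h
      rw [← this] at hwt
      have := (hmem 1).mp hwt
      simp at this
      norm_num at this
    have hval : D w * F w + f w * (F w * (a * ((1-w)⁻¹ * (-1)))) = 0 := by
      have hode' := hode w hwt
      field_simp
      linear_combination F w * hode'
    rwa [hval] at hmul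
  have hconst : f z * F z = f 0 * F 0 := by
    apply Convex.is_const_of_fderivWithin_eq_zero (𝕜 := ℂ) (convex_ball (0:ℂ) (3/4))
      ?_ ?_ hzt h0t
    · intro x hx
      exact ((hzero x hx).differentiableAt).differentiableWithinAt
    · intro x hx
      rw [fderivWithin_of_isOpen Metric.isOpen_ball hx]
      have h' := (hzero x hx).hasFDerivAt.fderiv
      rw [h']
      ext
      simp
  have hf0 : f 0 = 1 := by
    have hh : ∀ n : ℕ, n ≠ 0 → wc a n * (0:ℂ)^n = 0 := by
      intro n hn; simp [zero_pow hn]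
    rw [hfdef]
    simp only []
    rw [tsum_eq_single 0 hh]
    simp [wc_zero]
  have hF0 : F 0 = 1 := by
    rw [hFdef]
    simp [Complex.log_one]
  have hfz : f z = Complex.exp (-a * Complex.log (1 - z)) := by
    have h1 : f z * F z = 1 := by rw [hconst, hf0, hF0]; ring
    have h2 : f z = (F z)⁻¹ := eq_inv_of_mul_eq_one_left h1
    rw [h2, hFdef]
    simp only []
    rw [← Complex.exp_neg]
    ring_nf
  have := (summable_SA a (le_of_lt hz)).hasSum
  rwa [show ∑' n : ℕ, wc a n * z^n = f z from rfl, hfz] at this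


/-- Williams' identity (Lemma 2.4 of the paper): for complex `a, b` with `|a/b| < 1` and
`|b| ≥ 2`, using the principal power `(1 - 1/b)^(-a) = exp(-a log(1 - 1/b))`. -/
theorem stmt0 (a b : ℂ) (h1 : ‖a / b‖ < 1) (h2 : 2 ≤ ‖b‖) :
    b * (1 - (1 - a / b) * Complex.exp (-a * Complex.log (1 - 1 / b))) =
      a * (a - 1) / b *
        (1 / 2 + ∑' n : ℕ,
          (∏ k ∈ Finset.range (n + 1), (a + ((k : ℂ) + 1))) /
              (b ^ (n + 1) * ((n + 2).factorial : ℂ)) * (((n : ℂ) + 2) / ((n : ℂ) + 3))) := by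
  have hb : b ≠ 0 := by
    intro h
    rw [h] at h2
    simp at h2
    norm_num at h2
  have hz : ‖(1/b : ℂ)‖ < 3/4 := by
    rw [norm_div, norm_one]
    have hb2 : (2:ℝ) ≤ ‖b‖ := by exact h2
    have hbpos : (0:ℝ) < ‖b‖ := lt_of_lt_of_le (by norm_num) hb2
    rw [div_lt_iff₀ hbpos]
    nlinarith
  set z : ℂ := 1/b with hzdef
  set F : ℂ := Complex.exp (-a * Complex.log (1 - z)) with hFdef
  have hA : HasSum (fun n : ℕ => wc a n * z ^ n) F := hasSum_wc a hz
  have h1' : HasSum (fun n : ℕ => wc a (n+1) * z^(n+1)) (F - 1) := by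
    apply (hasSum_nat_add_iff (f := fun n : ℕ => wc a n * z^n) 1).mpr
    have heq : F - 1 + ∑ i ∈ Finset.range 1, wc a i * z^i = F := by
      rw [Finset.sum_range_one, wc_zero]
      ring
    rw [heq]
    exact hA
  have hV : HasSum (fun n : ℕ => a * z * (wc a n * z^n) - wc a (n+1) * z^(n+1))
      (a*z*F - (F-1)) := (hA.mul_left (a*z)).sub h1'
  have hbV := hV.mul_left b
  have hshift : HasSum (fun n : ℕ => b * (a * z * (wc a (n+1) * z^(n+1)) - wc a (n+2) * z^(n+2)))
      (b*(a*z*F - (F-1))) := by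
    apply (hasSum_nat_add_iff
      (f := fun n : ℕ => b * (a*z*(wc a n*z^n) - wc a (n+1)*z^(n+1))) 1).mpr
    have h0 : b * (a*z*(wc a 0*z^0) - wc a 1*z^1) = 0 := by
      rw [wc_zero, wc_one]; ring
    have heq : b*(a*z*F - (F-1)) + ∑ i ∈ Finset.range 1,
        (b * (a*z*(wc a i*z^i) - wc a (i+1)*z^(i+1))) = b*(a*z*F-(F-1)) := by
      rw [Finset.sum_range_one, h0, add_zero]
    rw [heq]
    exact hbV
  have hwc2 : wc a 2 = a * (a+1) / 2 := by
    rw [wc_def]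
    rw [Finset.prod_range_succ, Finset.prod_range_one]
    norm_num
  have hterm0 : b * (a*z*(wc a 1*z^1) - wc a 2*z^2) = a*(a-1)/b * (1/2) := by
    rw [wc_one, hwc2, hzdef]
    field_simp
    ring
  have hbz : b * z = 1 := by
    rw [hzdef]
    field_simp
  have hterm : ∀ n : ℕ, b * (a*z*(wc a (n+2)*z^(n+2)) - wc a (n+3)*z^(n+3))
      = a*(a-1)/b * ((∏ k ∈ Finset.range (n+1), (a + ((k:ℂ)+1))) /
          (b^(n+1) * (((n+2).factorial : ℕ) : ℂ)) * (((n:ℂ)+2)/((n:ℂ)+3))) := by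
    intro n
    have hf2 : (((n+2).factorial : ℕ) : ℂ) ≠ 0 := Nat.cast_ne_zero.mpr (Nat.factorial_ne_zero _)
    have hn3 : ((n:ℂ)+3) ≠ 0 := by
      have hc : ((n:ℂ)+3) = ((n+3 : ℕ):ℂ) := by push_cast; ring
      rw [hc]
      exact Nat.cast_ne_zero.mpr (by omega)
    set P : ℂ := ∏ k ∈ Finset.range (n+1), (a + ((k:ℂ)+1)) with hPdef
    have hprod : ∏ k ∈ Finset.range (n+2), (a + (k:ℂ)) = a * P := by
      rw [hPdef]
      rw [Finset.prod_range_succ']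
      push_cast
      ring
    have hfact : (((n+3).factorial : ℕ) : ℂ) = ((n:ℂ)+3) * (((n+2).factorial : ℕ) : ℂ) := by
      rw [show n+3 = (n+2)+1 from rfl, Nat.factorial_succ]
      push_cast
      ring
    have hP2' : wc a (n+2) * (((n+2).factorial : ℕ) : ℂ) = a * P := by
      rw [wc_def, hprod, div_mul_cancel₀ _ hf2]
    have hP3' : wc a (n+3) * (((n:ℂ)+3) * (((n+2).factorial : ℕ) : ℂ))
        = a * P * (a + ((n:ℂ)+2)) := by
      have h3 : wc a (n+3) = a * P * (a + ((n:ℂ)+2)) / (((n:ℂ)+3) * (((n+2).factorial : ℕ) : ℂ)) := by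
        rw [wc_def, Finset.prod_range_succ, hprod, hfact]
        push_cast
        ring
      rw [h3, div_mul_cancel₀ _ (mul_ne_zero hn3 hf2)]
    have hpow : (b*z)^(n+3) = 1 := by rw [hbz, one_pow]
    rw [div_mul_div_comm, div_mul_div_comm,
      eq_div_iff (mul_ne_zero hb (mul_ne_zero (mul_ne_zero (pow_ne_zero _ hb) hf2) hn3))]
    linear_combination (a*(((n:ℂ)+3))*(b*z)^(n+3)) * hP2' - (b*z)^(n+3) * hP3'
      + (a*(a-1)*P*(((n:ℂ)+2))) * hpow
  calc b * (1 - (1 - a/b) * F) = b*(a*z*F - (F-1)) := by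
        rw [hzdef]
        field_simp
        ring
    _ = ∑' n : ℕ, (b * (a * z * (wc a (n+1) * z^(n+1)) - wc a (n+2) * z^(n+2))) :=
        hshift.tsum_eq.symm
    _ = b * (a * z * (wc a 1 * z^1) - wc a 2 * z^2)
        + ∑' n : ℕ, (b * (a * z * (wc a (n+2) * z^(n+2)) - wc a (n+3) * z^(n+3))) := by
        rw [hshift.summable.tsum_eq_zero_add]
    _ = a*(a-1)/b * (1/2) + ∑' n : ℕ, (a*(a-1)/b *
          ((∏ k ∈ Finset.range (n+1), (a + ((k:ℂ)+1))) /
            (b^(n+1) * (((n+2).factorial : ℕ) : ℂ)) * (((n:ℂ)+2)/((n:ℂ)+3)))) := by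
        rw [hterm0]
        congr 1
        exact tsum_congr hterm
    _ = a * (a - 1) / b * (1 / 2 + ∑' n : ℕ,
          (∏ k ∈ Finset.range (n + 1), (a + ((k : ℂ) + 1))) /
            (b ^ (n + 1) * ((n + 2).factorial : ℂ)) * (((n : ℂ) + 2) / ((n : ℂ) + 3))) := by
        rw [tsum_mul_left]
        ring
end

section
/- Let $d \geq 1$ be an integer and let $a, b$ be complex numbers with $|a| \leq d$ and $b$ a real number with $b \geq d + 1$ (so $|a/b| < 1$). Define $k = b\left[1 - \left(1 - \frac{a}{b}\right)\left(1 - \frac{1}{b}\right)^{-a}\right]$. Then $|k| \leq \frac{d(d+1)}{2} \cdot \frac{1}{b} + \frac{C_d}{b^2}$, where $C_d = \frac{d(d+1)}{d!} \sum_{n=0}^{\infty} \frac{(n-1+d)!}{n!} \cdot \frac{1}{2^n}$. -/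
set_option maxHeartbeats 1000000


open Complex in
lemma series_bound_aux (z : ℂ) :
    ‖1 - (1 - z) * Complex.exp z‖ ≤
      ‖z‖ * Real.exp ‖z‖ - (Real.exp ‖z‖ - 1) := by
  set t : ℝ := ‖z‖ with htdef
  have hC : HasSum (fun n : ℕ => z ^ n / n.factorial) (Complex.exp z) := by
    rw [Complex.exp_eq_exp_ℂ]; exact NormedSpace.expSeries_div_hasSum_exp z
  have hRe : HasSum (fun n : ℕ => t ^ n / n.factorial) (Real.exp t) := by
    rw [Real.exp_eq_exp_ℝ]; exact NormedSpace.expSeries_div_hasSum_exp t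
  have h2 : HasSum (fun n : ℕ => z ^ (n+1) / n.factorial) (z * Complex.exp z) := by
    have := hC.mul_left z
    refine this.congr_fun fun n => ?_
    rw [pow_succ]; ring
  have h3 : HasSum (fun n : ℕ => z ^ (n+1) / (n+1).factorial) (Complex.exp z - 1) := by
    have := (hasSum_nat_add_iff' (f := fun n : ℕ => z ^ n / n.factorial) 1).2 hC
    simpa using this
  have h4 := h2.sub h3
  have h2R : HasSum (fun n : ℕ => t ^ (n+1) / n.factorial) (t * Real.exp t) := by
    have := hRe.mul_left t
    refine this.congr_fun fun n => ?_
    rw [pow_succ]; ring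
  have h3R : HasSum (fun n : ℕ => t ^ (n+1) / (n+1).factorial) (Real.exp t - 1) := by
    have := (hasSum_nat_add_iff' (f := fun n : ℕ => t ^ n / n.factorial) 1).2 hRe
    simpa using this
  have h4R := h2R.sub h3R
  have heq : ∀ n : ℕ, ‖z ^ (n+1) / n.factorial - z ^ (n+1) / (n+1).factorial‖
      = t ^ (n+1) / n.factorial - t ^ (n+1) / (n+1).factorial := by
    intro n
    have hfact : (0:ℝ) < n.factorial := by exact_mod_cast n.factorial_pos
    have hfact2 : (0:ℝ) < (n+1).factorial := by exact_mod_cast (n+1).factorial_pos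
    have hle : (n.factorial:ℝ) ≤ ((n+1).factorial:ℝ) := by
      exact_mod_cast Nat.factorial_le (Nat.le_succ n)
    have e1 : z ^ (n+1) / n.factorial - z ^ (n+1) / (n+1).factorial
        = z ^ (n+1) * (((1:ℝ)/n.factorial - 1/(n+1).factorial : ℝ) : ℂ) := by
      push_cast; ring
    rw [e1, norm_mul, norm_pow, Complex.norm_real, Real.norm_eq_abs, _root_.abs_of_nonneg (by
      rw [sub_nonneg]; apply one_div_le_one_div_of_le hfact hle)]
    rw [← htdef]; ring
  have hsummable : Summable (fun n : ℕ => ‖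
      (z ^ (n+1) / n.factorial - z ^ (n+1) / (n+1).factorial)‖) := by
    refine h4R.summable.congr fun n => (heq n).symm
  calc ‖1 - (1 - z) * Complex.exp z‖
      = ‖z * Complex.exp z - (Complex.exp z - 1)‖ := by ring_nf
    _ = ‖∑' n : ℕ, (z ^ (n+1) / n.factorial - z ^ (n+1) / (n+1).factorial)‖ := by
        rw [h4.tsum_eq]
    _ ≤ ∑' n : ℕ, ‖z ^ (n+1) / n.factorial - z ^ (n+1) / (n+1).factorial‖ := by
        apply norm_tsum_le_tsum_norm
        exact hsummable
    _ = t * Real.exp t - (Real.exp t - 1) := by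
        rw [← h4R.tsum_eq]
        congr 1; funext n; rw [heq n]


lemma quad_exp (t : ℝ) (ht : 0 ≤ t) : 1 + t + t^2/2 ≤ Real.exp t := by
  have h := Real.sum_le_exp_of_nonneg ht 3
  simp [Finset.sum_range_succ, Nat.factorial] at h
  convert h using 1 <;> ring_nf

lemma phi_le (t : ℝ) (h0 : 0 ≤ t) (h1 : t ≤ 1) :
    t * Real.exp t - (Real.exp t - 1) ≤ t^2/2 + t^3/2 := by
  have hq := quad_exp t h0
  nlinarith [mul_le_mul_of_nonneg_left hq (by linarith : (0:ℝ) ≤ 1 - t)]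

lemma expm1_bound (w : ℂ) (hw : ‖w‖ ≤ 1) :
    ‖Complex.exp w - 1‖ ≤ ‖w‖ + ‖w‖ ^ 2 := by
  have h := Complex.norm_exp_sub_one_sub_id_le hw
  calc ‖Complex.exp w - 1‖ = ‖(Complex.exp w - 1 - w) + w‖ := by ring_nf
    _ ≤ ‖Complex.exp w - 1 - w‖ + ‖w‖ := norm_add_le _ _
    _ ≤ ‖w‖ + ‖w‖ ^ 2 := by linarith

lemma log_bounds (x : ℝ) (h0 : 0 < x) (h2 : x ≤ 1/2) :
    x ≤ -Real.log (1-x) ∧ -Real.log (1-x) ≤ x + x^2/2 + 23/24*x^3 := by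
  have hx1 : (0:ℝ) < 1 - x := by linarith
  constructor
  · have := Real.log_le_sub_one_of_pos hx1; linarith
  · have h := Real.abs_log_sub_add_sum_range_le (x := x)
      (by rw [abs_of_pos h0]; linarith) 4
    rw [abs_of_pos h0] at h
    simp [Finset.sum_range_succ] at h
    rw [abs_le] at h
    obtain ⟨hl, -⟩ := h
    have hd : x^(4+1)/(1-x) ≤ 2*x^5 := by
      norm_num
      rw [div_le_iff₀ hx1]
      nlinarith [mul_nonneg (mul_nonneg (mul_nonneg (mul_nonneg h0.le h0.le) h0.le) h0.le) (mul_nonneg h0.le (by linarith : (0:ℝ) ≤ 1 - 2*x))]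
    nlinarith [pow_pos h0 3, pow_pos h0 4, pow_pos h0 5]


lemma polyIneq (D : ℝ) (hD : 1 ≤ D) :
    D^2*((12*D+35)/24)^2 + 5/8*D^3*((12*D+35)/24)*(2*D+1)
      ≤ (D^3/2 - 23/24*D + 2)*(D+1)^3 := by
  nlinarith [sq_nonneg (D-1), sq_nonneg D, mul_nonneg (sub_nonneg.2 hD) (sq_nonneg (D-1)),
    mul_nonneg (mul_nonneg (sub_nonneg.2 hD) (sub_nonneg.2 hD)) (sq_nonneg (D-1)),
    mul_nonneg (mul_nonneg (mul_nonneg (sub_nonneg.2 hD) (sub_nonneg.2 hD)) (sub_nonneg.2 hD)) (sq_nonneg (D-1)),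
    mul_nonneg (mul_nonneg (mul_nonneg (mul_nonneg (sub_nonneg.2 hD) (sub_nonneg.2 hD)) (sub_nonneg.2 hD)) (sub_nonneg.2 hD)) (sq_nonneg (D-1)),
    sq_nonneg (D-1), mul_nonneg (sub_nonneg.2 hD) (mul_nonneg (sub_nonneg.2 hD) (sub_nonneg.2 hD))]

lemma cube2 (d : ℕ) (hd : 1 ≤ d) : ((d:ℝ))^3 + 2 ≤ ((d:ℝ)+1) * 2^d := by
  rcases le_or_gt d 3 with h | h
  · interval_cases d <;> norm_num
  · have h4 : 4 ≤ d := h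
    clear hd h
    induction d, h4 using Nat.le_induction with
    | base => norm_num
    | succ n hn ih =>
      have hn' : (4:ℝ) ≤ n := by exact_mod_cast hn
      have h2 : (1:ℝ) ≤ 2^n := one_le_pow₀ (by norm_num)
      push_cast [pow_succ] at ih ⊢
      nlinarith [ih, hn', h2, sq_nonneg ((n:ℝ) - 4)]

lemma tsum_eval (e : ℕ) :
    ∑' n : ℕ, ((n + (e+1) - 1).factorial : ℝ) / (n.factorial : ℝ) / 2 ^ n
      = (e.factorial : ℝ) * 2 ^ (e+1) := by
  have hr : ‖(1/2 : ℝ)‖ < 1 := by rw [Real.norm_eq_abs, abs_of_pos] <;> norm_num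
  have h := hasSum_choose_mul_geometric_of_norm_lt_one (𝕜 := ℝ) e hr
  have h2 := h.mul_left (e.factorial : ℝ)
  have h3 : HasSum (fun n : ℕ => ((n + (e+1) - 1).factorial : ℝ) / (n.factorial : ℝ) / 2 ^ n)
      ((e.factorial : ℝ) * (1 / (1 - 1/2) ^ (e+1))) := by
    refine h2.congr_fun fun n => ?_
    have key : ((n+e).choose e) * (e.factorial * n.factorial) = (n+e).factorial := by
      simpa [mul_assoc] using Nat.choose_mul_factorial_mul_factorial (Nat.le_add_left e n)
    have keyR : (((n+e).choose e : ℝ)) * (e.factorial * n.factorial) = ((n+e).factorial : ℝ) := by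
      exact_mod_cast key
    have hn0 : ((n.factorial : ℝ)) ≠ 0 := by positivity
    have he0 : ((e.factorial : ℝ)) ≠ 0 := by positivity
    rw [show n + (e+1) - 1 = n + e from by omega, ← keyR]
    rw [div_pow, one_pow]
    field_simp
  rw [h3.tsum_eq]
  congr 1
  rw [show (1:ℝ) - 1/2 = 2⁻¹ by norm_num, one_div, ← inv_pow, inv_inv]


lemma crux (D x t δ : ℝ) (hD : 1 ≤ D) (hx : 0 < x) (hxD : x*(D+1) ≤ 1)
    (ht0 : 0 ≤ t) (ht : t ≤ D*x) (hδ0 : 0 ≤ δ) (hδ : δ ≤ D*x^2*(1/2 + 23/24*x)) :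
    (t^2/2 + t^3/2) + (1 + (t^2/2 + t^3/2))*(δ + δ^2)
      ≤ D*(D+1)/2*x^2 + (D^3+2)*x^3 := by
  have hD0 : (0:ℝ) < D := by linarith
  have hx2 : x ≤ 1/2 := by nlinarith
  have hDx : D*x ≤ 1 - x := by nlinarith
  have hDx0 : 0 ≤ D*x := by positivity
  obtain ⟨w, hw⟩ : ∃ w : ℝ, w = 1/2 + 23/24*x := ⟨_, rfl⟩
  have hw0 : (0:ℝ) < w := by rw [hw]; positivity
  have hw1 : w ≤ 1 := by rw [hw]; linarith
  have hδw : δ ≤ D*x^2*w := by rw [hw]; exact hδ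
  have hDxw0 : 0 ≤ D*x^2*w := by positivity
  obtain ⟨m, hmdef⟩ : ∃ m : ℝ, m = t^2/2 + t^3/2 := ⟨_, rfl⟩
  obtain ⟨q, hqdef⟩ : ∃ q : ℝ, q = δ + δ^2 := ⟨_, rfl⟩
  have hm : m ≤ D^2*x^2/2*(1+D*x) := by
    have h2 : t^2 ≤ (D*x)^2 := by nlinarith
    have h3 : t^3 ≤ (D*x)^3 := by nlinarith
    rw [hmdef]; nlinarith
  have hm0 : (0:ℝ) ≤ m := by rw [hmdef]; positivity
  have hδ14 : δ ≤ 1/4 := by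
    have hxw0 : 0 ≤ x*w := by positivity
    have h1 : (D*x)*(x*w) ≤ (1-x)*(x*w) := mul_le_mul_of_nonneg_right hDx hxw0
    have h2 : x*w ≤ x := by nlinarith
    have h3 : (1-x)*(x*w) ≤ (1-x)*x := by nlinarith
    have h4 : (1-x)*x ≤ 1/4 := by nlinarith [sq_nonneg (1-2*x)]
    nlinarith
  have hq : q ≤ 5/4*(D*x^2*w) := by
    have h5 := mul_le_mul_of_nonneg_left hδ14 hδ0
    rw [hqdef]; nlinarith
  have hq0 : (0:ℝ) ≤ q := by rw [hqdef]; positivity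
  have hq2 : q ≤ D*x^2*w + (D*x^2*w)^2 := by
    have h6 : δ^2 ≤ (D*x^2*w)^2 := by nlinarith
    rw [hqdef]; nlinarith
  have hprod : m*q ≤ (D^2*x^2/2*(1+D*x)) * (5/4*(D*x^2*w)) :=
    mul_le_mul hm hq hq0 (by positivity)
  have hwD : w*(D+1) ≤ (12*D+35)/24 := by rw [hw]; nlinarith
  have hwD0 : 0 ≤ w*(D+1) := by positivity
  have h1Dx : (1+D*x)*(D+1) ≤ 2*D+1 := by nlinarith
  have h1Dx0 : 0 ≤ (1+D*x)*(D+1) := by positivity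
  have e2 : (w*(D+1))*((1+D*x)*(D+1)) ≤ ((12*D+35)/24)*(2*D+1) :=
    mul_le_mul hwD h1Dx h1Dx0 (by positivity)
  have e1 : (w*(D+1))^2 ≤ ((12*D+35)/24)^2 := by nlinarith
  have hS0 : 0 ≤ D^2*(w*(D+1))^2 + 5/8*D^3*((w*(D+1))*((1+D*x)*(D+1))) := by positivity
  have key : x*(D^2*w^2 + 5/8*D^3*(w*(1+D*x))) ≤ D^3/2 - 23/24*D + 2 := by
    refine le_of_mul_le_mul_right ?_ (show (0:ℝ) < (D+1)^3 by positivity)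
    have idd : x*(D^2*w^2 + 5/8*D^3*(w*(1+D*x))) * (D+1)^3
        = (x*(D+1)) * (D^2*(w*(D+1))^2 + 5/8*D^3*((w*(D+1))*((1+D*x)*(D+1)))) := by ring
    rw [idd]
    calc (x*(D+1)) * (D^2*(w*(D+1))^2 + 5/8*D^3*((w*(D+1))*((1+D*x)*(D+1))))
        ≤ 1 * (D^2*(w*(D+1))^2 + 5/8*D^3*((w*(D+1))*((1+D*x)*(D+1)))) :=
          mul_le_mul_of_nonneg_right hxD hS0
      _ ≤ D^2*((12*D+35)/24)^2 + 5/8*D^3*(((12*D+35)/24)*(2*D+1)) := by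
          rw [one_mul]
          have i1 := mul_le_mul_of_nonneg_left e1 (show (0:ℝ) ≤ D^2 by positivity)
          have i2 := mul_le_mul_of_nonneg_left e2 (show (0:ℝ) ≤ 5/8*D^3 by positivity)
          linarith
      _ ≤ (D^3/2 - 23/24*D + 2)*(D+1)^3 := by
          have := polyIneq D hD
          linarith
  have key3 : x^3*(x*(D^2*w^2 + 5/8*D^3*(w*(1+D*x)))) ≤ x^3*(D^3/2 - 23/24*D + 2) :=
    mul_le_mul_of_nonneg_left key (by positivity)
  have expand : D^2*x^2/2*(1+D*x) + (D*x^2*w + (D*x^2*w)^2)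
      + (D^2*x^2/2*(1+D*x)) * (5/4*(D*x^2*w))
      = D*(D+1)/2*x^2 + (D^3/2 + 23/24*D)*x^3
        + x^3*(x*(D^2*w^2 + 5/8*D^3*(w*(1+D*x)))) := by
    rw [hw]; ring
  have hfin : m + (1 + m)*q = m + q + m*q := by ring
  rw [← hmdef, ← hqdef, hfin]
  nlinarith [hm, hq2, hprod, key3, expand, pow_pos hx 3]


/-- Lemma 2.5 of the paper: bound on `k = b[1 - (1 - a/b)(1 - 1/b)^{-a}]` (principal power)
for `|a| ≤ d` and real `b ≥ d + 1`, with the explicit constant `C_d`. -/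
theorem stmt1 (d : ℕ) (hd : 1 ≤ d) (a : ℂ) (b : ℝ)
    (ha : ‖a‖ ≤ d) (hb : (d : ℝ) + 1 ≤ b) :
    ‖(b : ℂ) * (1 - (1 - a / (b : ℂ)) *
        Complex.exp (-a * Complex.log (1 - 1 / (b : ℂ))))‖ ≤
      (d : ℝ) * (d + 1) / 2 * (1 / b) +
        ((d : ℝ) * (d + 1) / d.factorial *
          ∑' n : ℕ, ((n + d - 1).factorial : ℝ) / (n.factorial : ℝ) / 2 ^ n) / b ^ 2 := by
  obtain ⟨e, rfl⟩ : ∃ e, d = e + 1 := ⟨d - 1, by omega⟩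
  set D : ℝ := ((e+1 : ℕ) : ℝ) with hDdef
  have hD1 : (1:ℝ) ≤ D := by rw [hDdef]; exact_mod_cast Nat.one_le_iff_ne_zero.2 (by omega)
  have hb0 : (0:ℝ) < b := by linarith
  have hbC : (b:ℂ) ≠ 0 := by exact_mod_cast hb0.ne'
  set x : ℝ := 1/b with hxdef
  have hx0 : 0 < x := by rw [hxdef]; positivity
  have hbx : b * x = 1 := by rw [hxdef]; field_simp
  have hxD : x*(D+1) ≤ 1 := by
    rw [hxdef, div_mul_eq_mul_div, div_le_one hb0, one_mul]; linarith
  have hx2 : x ≤ 1/2 := by nlinarith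
  have h1x0 : (0:ℝ) < 1 - x := by linarith
  -- rewrite the complex log
  have hcast : (1 : ℂ) - 1/(b:ℂ) = (((1 - x : ℝ)) : ℂ) := by
    rw [hxdef]; push_cast; ring
  have hlog : Complex.log (1 - 1/(b:ℂ)) = ((Real.log (1-x) : ℝ) : ℂ) := by
    rw [hcast, ← Complex.ofReal_log h1x0.le]
  obtain ⟨hr1, hr2⟩ := log_bounds x hx0 hx2
  have hexp : Complex.exp (-a * Complex.log (1 - 1/(b:ℂ)))
      = Complex.exp (a*(x:ℂ)) * Complex.exp (a*(((-Real.log (1-x) - x : ℝ)) : ℂ)) := by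
    rw [hlog, ← Complex.exp_add]
    congr 1
    push_cast
    ring
  have hdiv : a / (b:ℂ) = a * (x:ℂ) := by
    rw [hxdef]; push_cast; field_simp
  set z : ℂ := a * (x:ℂ) with hzdef
  set wc : ℂ := a*(((-Real.log (1-x) - x : ℝ)) : ℂ) with hwcdef
  -- abs values
  set A : ℝ := ‖a‖ with hAdef
  have hA0 : 0 ≤ A := norm_nonneg a
  have hAD : A ≤ D := by rw [hAdef, hDdef]; exact_mod_cast ha
  have htval : ‖z‖ = A * x := by
    rw [hzdef, norm_mul, Complex.norm_real, Real.norm_eq_abs, _root_.abs_of_nonneg hx0.le, hAdef]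
  have hδval : ‖wc‖ = A * (-Real.log (1-x) - x) := by
    rw [hwcdef, norm_mul, Complex.norm_real, Real.norm_eq_abs, _root_.abs_of_nonneg (by linarith), hAdef]
  set t : ℝ := ‖z‖ with htdef
  set δ : ℝ := ‖wc‖ with hδdef
  have habs_sub : ∀ p q : ℂ, ‖p - q‖ ≤ ‖p‖ + ‖q‖ := by
    intro p q
    simpa [sub_eq_add_neg] using norm_add_le p (-q)
  have ht0 : 0 ≤ t := norm_nonneg z
  have hδ0 : 0 ≤ δ := norm_nonneg wc
  have ht : t ≤ D*x := by
    rw [htval]; exact mul_le_mul_of_nonneg_right hAD hx0.le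
  have ht1 : t ≤ 1 := by nlinarith
  have hδb : δ ≤ D*x^2*(1/2 + 23/24*x) := by
    rw [hδval]
    have h1 : -Real.log (1-x) - x ≤ x^2/2 + 23/24*x^3 := by linarith
    have h2 : A * (-Real.log (1-x) - x) ≤ D * (x^2/2 + 23/24*x^3) := by
      apply mul_le_mul hAD h1 (by linarith) (by linarith)
    nlinarith
  have hδ1 : δ ≤ 1 := by nlinarith
  -- the three complex bounds
  have bound1 : ‖1 - (1-z)*Complex.exp z‖ ≤ t^2/2 + t^3/2 := by
    refine le_trans (series_bound_aux z) ?_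
    exact phi_le t ht0 ht1
  have bound2 : ‖(1-z)*Complex.exp z‖ ≤ 1 + (t^2/2 + t^3/2) := by
    have hre : (1-z)*Complex.exp z = 1 - (1 - (1-z)*Complex.exp z) := by ring
    rw [hre]
    refine le_trans (habs_sub _ _) ?_
    rw [norm_one]
    linarith
  have bound3 : ‖Complex.exp wc - 1‖ ≤ δ + δ^2 :=
    expm1_bound wc hδ1
  -- assemble
  have habs : ‖(b:ℂ) * (1 - (1 - a/(b:ℂ)) * Complex.exp (-a * Complex.log (1 - 1/(b:ℂ))))‖
      = b * ‖1 - (1-z)*(Complex.exp z * Complex.exp wc)‖ := by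
    rw [norm_mul, Complex.norm_real, Real.norm_eq_abs, _root_.abs_of_nonneg hb0.le, hexp, hdiv]
  have hsplit : (1:ℂ) - (1-z)*(Complex.exp z * Complex.exp wc)
      = (1 - (1-z)*Complex.exp z) - ((1-z)*Complex.exp z)*(Complex.exp wc - 1) := by ring
  have hqpos : (0:ℝ) ≤ δ + δ^2 := by positivity
  have hinner : ‖1 - (1-z)*(Complex.exp z * Complex.exp wc)‖
      ≤ (t^2/2 + t^3/2) + (1 + (t^2/2 + t^3/2))*(δ + δ^2) := by
    rw [hsplit]
    refine le_trans (habs_sub _ _) ?_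
    have hmul : ‖((1-z)*Complex.exp z)*(Complex.exp wc - 1)‖
        ≤ (1 + (t^2/2 + t^3/2))*(δ + δ^2) := by
      rw [norm_mul]
      exact mul_le_mul bound2 bound3 (norm_nonneg _) (by positivity)
    linarith
  have hcrux := crux D x t δ hD1 hx0 hxD ht0 ht hδ0 hδb
  rw [habs]
  have main2 : b * ‖1 - (1-z)*(Complex.exp z * Complex.exp wc)‖
      ≤ b * (D*(D+1)/2*x^2 + (D^3+2)*x^3) :=
    mul_le_mul_of_nonneg_left (le_trans hinner hcrux) hb0.le
  have hbb : b * (D*(D+1)/2*x^2 + (D^3+2)*x^3) = D*(D+1)/2*x + (D^3+2)*x^2 := by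
    rw [hxdef]
    field_simp
  have hc2 : (D^3+2) ≤ (D+1) * 2^(e+1) := by
    have := cube2 (e+1) (by omega)
    rw [hDdef]
    exact_mod_cast this
  have hx2nn : (0:ℝ) ≤ x^2 := sq_nonneg x
  have step2 : D*(D+1)/2*x + (D^3+2)*x^2 ≤ D*(D+1)/2*x + ((D+1) * 2^(e+1))*x^2 := by
    nlinarith [mul_le_mul_of_nonneg_right hc2 hx2nn]
  have hRHSeq : (D : ℝ) * (D + 1) / 2 * x +
        ((D : ℝ) * (D + 1) / (e+1).factorial *
          ((e.factorial : ℝ) * 2 ^ (e+1))) / b ^ 2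
      = D*(D+1)/2*x + ((D+1) * 2^(e+1))*x^2 := by
    have hfac : ((e+1).factorial : ℝ) = (e+1) * e.factorial := by
      exact_mod_cast Nat.factorial_succ e
    have hef : (e.factorial : ℝ) ≠ 0 := by positivity
    have hDe : D = (e:ℝ) + 1 := by rw [hDdef]; push_cast; ring
    rw [hfac, hDe, hxdef]
    field_simp
  rw [tsum_eval e, hRHSeq]
  linarith [main2, step2]
end
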